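/- arXiv:1210.6492 — 2 statements merged into one kernel-verified Lean document; each statement's English description precedes it below -/
import Mathlib

section
/- A stochastic matrix with all entries strictly positive has exactly one eigenvalue equal to 1, and all other eigenvalues have absolute value strictly less than 1. -/
open Polynomial Matrix Finset Complex

namespace PerronAux

variable {n : ℕ}

lemma conv_le (P : Matrix (Fin n) (Fin n) ℝ) (hpos : ∀ i j, 0 < P i j)
    (hrow : ∀ i, ∑ j, P i j = 1) (u : Fin n → ℝ) (i : Fin n) (hmax : ∀ j, u j ≤ u i) :
    ∑ j, P i j * u j ≤ u i := by
  calc ∑ j, P i j * u j ≤ ∑ j, P i j * u i := by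
        refine Finset.sum_le_sum fun j _ => ?_
        exact mul_le_mul_of_nonneg_left (hmax j) (hpos i j).le
    _ = u i := by rw [← Finset.sum_mul, hrow, one_mul]

lemma mulVec_re (P : Matrix (Fin n) (Fin n) ℝ) (v : Fin n → ℂ) (i : Fin n) :
    ((P.map Complex.ofReal).mulVec v i).re = ∑ j, P i j * (v j).re := by
  simp [Matrix.mulVec, dotProduct, Complex.re_sum, Complex.re_ofReal_mul]

end PerronAux

namespace PerronAux

lemma re_const (P : Matrix (Fin n) (Fin n) ℝ) (hpos : ∀ i j, 0 < P i j)
    (hrow : ∀ i, ∑ j, P i j = 1) (v : Fin n → ℂ)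
    (hv : (P.map Complex.ofReal).mulVec v = v) (i : Fin n)
    (hmax : ∀ j, (v j).re ≤ (v i).re) (j : Fin n) :
    (v j).re = (v i).re := by
  have h1 : ∑ k, P i k * (v k).re = (v i).re := by
    rw [← mulVec_re, hv]
  have h2 : ∑ k, P i k * (v i).re = (v i).re := by
    rw [← Finset.sum_mul, hrow, one_mul]
  have key := (Finset.sum_eq_sum_iff_of_le (s := Finset.univ)
    (f := fun k => P i k * (v k).re) (g := fun k => P i k * (v i).re)
    (fun k _ => mul_le_mul_of_nonneg_left (hmax k) (hpos i k).le)).1 (h1.trans h2.symm)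
  have := key j (Finset.mem_univ j)
  exact mul_left_cancel₀ (hpos i j).ne' this

lemma eig_const (hn : 0 < n) (P : Matrix (Fin n) (Fin n) ℝ) (hpos : ∀ i j, 0 < P i j)
    (hrow : ∀ i, ∑ j, P i j = 1) (v : Fin n → ℂ)
    (hv : (P.map Complex.ofReal).mulVec v = v) (j k : Fin n) : v j = v k := by
  have hre : ∀ (w : Fin n → ℂ), (P.map Complex.ofReal).mulVec w = w →
      ∀ j k : Fin n, (w j).re = (w k).re := by
    intro w hw j k
    obtain ⟨i, -, hi⟩ := Finset.exists_max_image Finset.univ (fun j => (w j).re)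
      ⟨⟨0, hn⟩, Finset.mem_univ _⟩
    rw [re_const P hpos hrow w hw i (fun j => hi j (Finset.mem_univ j)) j,
      re_const P hpos hrow w hw i (fun j => hi j (Finset.mem_univ j)) k]
  have him : (P.map Complex.ofReal).mulVec (Complex.I • v) = Complex.I • v := by
    rw [Matrix.mulVec_smul, hv]
  apply Complex.ext
  · exact hre v hv j k
  · have := hre _ him j k
    simpa [Complex.mul_re] using this

lemma no_jordan (hn : 0 < n) (P : Matrix (Fin n) (Fin n) ℝ) (hpos : ∀ i j, 0 < P i j)
    (hrow : ∀ i, ∑ j, P i j = 1) (v : Fin n → ℂ) (c : ℂ)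
    (hv : (P.map Complex.ofReal).mulVec v = v + c • (fun _ => (1:ℂ))) : c = 0 := by
  have key : ∀ (w : Fin n → ℂ) (d : ℂ),
      (P.map Complex.ofReal).mulVec w = w + d • (fun _ => (1:ℂ)) → d.re ≤ 0 := by
    intro w d hw
    have hne : (Finset.univ : Finset (Fin n)).Nonempty := ⟨⟨0, hn⟩, Finset.mem_univ _⟩
    obtain ⟨i, -, hi⟩ := Finset.exists_max_image Finset.univ (fun j => (w j).re) hne
    have h1 : ∑ k, P i k * (w k).re = (w i).re + d.re := by
      rw [← mulVec_re, hw]; simp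
    have h2 := conv_le P hpos hrow (fun j => (w j).re) i (fun j => hi j (Finset.mem_univ j))
    rw [h1] at h2; linarith
  have hneg : (P.map Complex.ofReal).mulVec (-v) = (-v) + (-c) • (fun _ => (1:ℂ)) := by
    rw [Matrix.mulVec_neg, hv]; funext j; simp; ring
  have hI : (P.map Complex.ofReal).mulVec (Complex.I • v)
      = (Complex.I • v) + (Complex.I * c) • (fun _ => (1:ℂ)) := by
    rw [Matrix.mulVec_smul, hv]; funext j; simp; ring
  have hnI : (P.map Complex.ofReal).mulVec (-(Complex.I • v))
      = (-(Complex.I • v)) + (-(Complex.I * c)) • (fun _ => (1:ℂ)) := by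
    rw [Matrix.mulVec_neg, hI]; funext j; simp; ring
  have e1 := key v c hv
  have e2 := key _ _ hneg
  have e3 := key _ _ hI
  have e4 := key _ _ hnI
  simp only [Complex.neg_re, Complex.mul_re, Complex.I_re, Complex.I_im] at e2 e3 e4
  apply Complex.ext <;> [skip; skip] <;> simp <;> linarith

end PerronAux

namespace PerronAux

lemma abs_lt_one (hn : 0 < n) (P : Matrix (Fin n) (Fin n) ℝ) (hpos : ∀ i j, 0 < P i j)
    (hrow : ∀ i, ∑ j, P i j = 1) (μ : ℂ) (v : Fin n → ℂ) (hv0 : v ≠ 0)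
    (hv : (P.map Complex.ofReal).mulVec v = μ • v) (hμ : μ ≠ 1) :
    ‖μ‖ < 1 := by
  classical
  obtain ⟨i, -, hi'⟩ := Finset.exists_max_image Finset.univ
    (fun j => ‖v j‖) ⟨⟨0, hn⟩, Finset.mem_univ _⟩
  have hi : ∀ j, ‖v j‖ ≤ ‖v i‖ := fun j => hi' j (Finset.mem_univ j)
  set r := ‖v i‖ with hr
  have hrpos : 0 < r := by
    obtain ⟨j, hj⟩ : ∃ j, v j ≠ 0 := by
      by_contra h; push_neg at h; exact hv0 (funext h)
    exact lt_of_lt_of_le (norm_pos_iff.2 hj) (hi j)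
  have hsum : ∀ k, (P.map Complex.ofReal).mulVec v k = ∑ j, (P k j : ℂ) * v j := by
    intro k; simp [Matrix.mulVec, dotProduct, Matrix.map_apply]
  -- basic bound: abs μ ≤ 1
  have hb : ‖μ‖ * r ≤ r := by
    have : ‖μ‖ * r = ‖∑ j, (P i j : ℂ) * v j‖ := by
      rw [← hsum, hv]
      simp only [Pi.smul_apply, smul_eq_mul, norm_mul, hr]
    rw [this]
    calc ‖∑ j, (P i j : ℂ) * v j‖ ≤ ∑ j, ‖(P i j : ℂ) * v j‖ :=
          norm_sum_le _ _
      _ = ∑ j, P i j * ‖v j‖ := by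
          refine Finset.sum_congr rfl fun j _ => ?_
          rw [norm_mul, Complex.norm_real, Real.norm_of_nonneg (hpos i j).le]
      _ ≤ r := conv_le P hpos hrow _ i hi
  have hle : ‖μ‖ ≤ 1 := by
    by_contra h; push_neg at h; nlinarith
  rcases lt_or_eq_of_le hle with h | h
  · exact h
  exfalso
  set u : ℂ := μ * v i with hu
  have hur : ‖u‖ = r := by rw [hu, norm_mul, h, one_mul]
  have husum : u = ∑ j, (P i j : ℂ) * v j := by rw [← hsum, hv]; simp [hu]
  have hnormu : u.re * u.re + u.im * u.im = r ^ 2 := by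
    have h2 := Complex.sq_norm u
    rw [hur] at h2
    rw [h2]; simp [Complex.normSq_apply]
  have key : ((starRingEnd ℂ) u * v i).re = r ^ 2 := by
    have hsplit : (starRingEnd ℂ) u * u = ∑ j, (starRingEnd ℂ) u * ((P i j : ℂ) * v j) := by
      rw [← Finset.mul_sum, ← husum]
    have h1 : ∑ j, ((starRingEnd ℂ) u * ((P i j : ℂ) * v j)).re = r ^ 2 := by
      rw [← Complex.re_sum, ← hsplit]
      simp [Complex.mul_re, Complex.conj_re, Complex.conj_im]
      nlinarith [hnormu]
    have hf : ∀ j, ((starRingEnd ℂ) u * ((P i j : ℂ) * v j)).re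
        = P i j * ((starRingEnd ℂ) u * v j).re := by
      intro j
      rw [show (starRingEnd ℂ) u * ((P i j : ℂ) * v j)
        = (P i j : ℂ) * ((starRingEnd ℂ) u * v j) by ring, Complex.re_ofReal_mul]
    have hbound : ∀ j, P i j * ((starRingEnd ℂ) u * v j).re ≤ P i j * r ^ 2 := by
      intro j
      refine mul_le_mul_of_nonneg_left ?_ (hpos i j).le
      calc ((starRingEnd ℂ) u * v j).re ≤ ‖(starRingEnd ℂ) u * v j‖ :=
            Complex.re_le_norm _
        _ = r * ‖v j‖ := by
            rw [norm_mul, Complex.norm_conj, hur]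
        _ ≤ r * r := mul_le_mul_of_nonneg_left (hi j) hrpos.le
        _ = r ^ 2 := (sq r).symm
    have hsumeq : ∑ j, P i j * ((starRingEnd ℂ) u * v j).re = ∑ j, P i j * r ^ 2 := by
      rw [← Finset.sum_congr rfl (fun j _ => hf j), h1, ← Finset.sum_mul, hrow, one_mul]
    have := (Finset.sum_eq_sum_iff_of_le (fun j _ => hbound j)).1 hsumeq i (Finset.mem_univ i)
    exact mul_left_cancel₀ (hpos i i).ne' this
  have hvi : u = v i := by
    have hnz : Complex.normSq (u - v i) = 0 := by
      have hnv : (v i).re * (v i).re + (v i).im * (v i).im = r ^ 2 := by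
        have h2 := Complex.sq_norm (v i)
        rw [← hr] at h2
        rw [h2]; simp [Complex.normSq_apply]
      simp only [Complex.normSq_apply, Complex.sub_re, Complex.sub_im] at *
      simp only [Complex.mul_re, Complex.conj_re, Complex.conj_im] at key
      nlinarith [hnormu, hnv, key]
    exact sub_eq_zero.1 (Complex.normSq_eq_zero.1 hnz)
  have hvine : v i ≠ 0 := by
    intro h0; rw [h0] at hr; simp at hr; exact hrpos.ne' (by rw [hr])
  apply hμ
  have hmv : μ * v i = 1 * v i := by rw [one_mul]; exact hu.symm.trans hvi
  exact mul_right_cancel₀ hvine hmv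

end PerronAux

namespace PerronAux

lemma eval_charpoly (M : Matrix (Fin n) (Fin n) ℂ) (μ : ℂ) :
    M.charpoly.eval μ = (Matrix.diagonal (fun _ => μ) - M).det := by
  rw [Matrix.charpoly, ← Polynomial.coe_evalRingHom, RingHom.map_det]
  congr 1
  ext i j
  by_cases h : i = j
  · subst h; simp [Matrix.charmatrix_apply_eq]
  · simp [Matrix.charmatrix_apply_ne _ _ _ h, Matrix.diagonal_apply_ne _ h]

lemma charpoly_comp (M : Matrix (Fin n) (Fin n) ℂ) (c : ℂ) :
    M.charpoly.comp (X + C c) = (M - c • (1 : Matrix (Fin n) (Fin n) ℂ)).charpoly := by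
  rw [Matrix.charpoly, Matrix.charpoly,
    show (Matrix.charmatrix M).det.comp (X + C c)
      = (Polynomial.compRingHom (X + C c)) (Matrix.charmatrix M).det from rfl,
    RingHom.map_det]
  congr 1
  ext i j
  by_cases h : i = j
  · subst h
    simp only [RingHom.mapMatrix_apply, Matrix.map_apply, Matrix.charmatrix_apply_eq,
      Polynomial.coe_compRingHom_apply, sub_comp, X_comp, C_comp, Matrix.sub_apply,
      Matrix.smul_apply, Matrix.one_apply_eq, smul_eq_mul, mul_one, map_sub]
    ring_nf
  · simp [Matrix.charmatrix_apply_ne _ _ _ h, Matrix.one_apply_ne h]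

end PerronAux

namespace PerronAux

lemma mulVec_ones (P : Matrix (Fin n) (Fin n) ℝ) (hrow : ∀ i, ∑ j, P i j = 1) :
    (P.map Complex.ofReal).mulVec (fun _ => (1:ℂ)) = fun _ => (1:ℂ) := by
  funext i
  simp only [Matrix.mulVec, dotProduct, Matrix.map_apply, mul_one]
  rw [← Complex.ofReal_sum]
  rw [hrow i, Complex.ofReal_one]

lemma B_mulVec (P : Matrix (Fin n) (Fin n) ℝ) (x : Fin n → ℂ) :
    ((P.map Complex.ofReal) - 1).mulVec x = (P.map Complex.ofReal).mulVec x - x := by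
  rw [Matrix.sub_mulVec, Matrix.one_mulVec]

lemma collapse (hn : 0 < n) (P : Matrix (Fin n) (Fin n) ℝ) (hpos : ∀ i j, 0 < P i j)
    (hrow : ∀ i, ∑ j, P i j = 1) :
    ∀ (k : ℕ) (x : Fin n → ℂ),
      (((P.map Complex.ofReal) - 1) ^ (k+1)).mulVec x = 0 →
      ((P.map Complex.ofReal) - 1).mulVec x = 0 := by
  set A := P.map Complex.ofReal
  set B := A - 1 with hB
  have step : ∀ x : Fin n → ℂ, B.mulVec (B.mulVec x) = 0 → B.mulVec x = 0 := by
    intro x hx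
    set w := B.mulVec x with hw
    have hwe : A.mulVec w = w := by
      have := hx
      rw [B_mulVec P w, sub_eq_zero] at this
      exact this
    have hconst : w = (w ⟨0, hn⟩) • (fun _ => (1:ℂ)) := by
      funext j
      simp only [Pi.smul_apply, smul_eq_mul, mul_one]
      exact eig_const hn P hpos hrow w hwe j ⟨0, hn⟩
    have hAx : A.mulVec x = x + (w ⟨0, hn⟩) • (fun _ => (1:ℂ)) := by
      rw [← hconst, hw, B_mulVec P x]
      abel
    have hc0 := no_jordan hn P hpos hrow x _ hAx
    rw [hw, B_mulVec P x, hAx, hc0, zero_smul, add_zero, sub_self]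
  intro k
  induction k with
  | zero => intro x hx; simpa using hx
  | succ k ih =>
    intro x hx
    have h1 : (B ^ (k+1)).mulVec (B.mulVec x) = 0 := by
      rw [Matrix.mulVec_mulVec, ← pow_succ]
      exact hx
    exact step x (ih _ h1)

end PerronAux

namespace PerronAux

lemma maxgen_eq_span (hn : 0 < n) (P : Matrix (Fin n) (Fin n) ℝ) (hpos : ∀ i j, 0 < P i j)
    (hrow : ∀ i, ∑ j, P i j = 1) :
    Module.End.maxGenEigenspace (Matrix.toLin' ((P.map Complex.ofReal) - 1)) 0
      = Submodule.span ℂ {(fun _ => (1:ℂ) : Fin n → ℂ)} := by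
  set A := P.map Complex.ofReal
  set B := A - 1 with hB
  have hpow : ∀ (k : ℕ) (x : Fin n → ℂ),
      ((Matrix.toLin' B) ^ k) x = (B ^ k).mulVec x := by
    intro k
    induction k with
    | zero => intro x; simp [Matrix.one_mulVec]
    | succ k ih =>
      intro x
      rw [pow_succ, pow_succ, Module.End.mul_apply, ih (Matrix.toLin' B x),
        Matrix.toLin'_apply, Matrix.mulVec_mulVec]
  ext x
  rw [Module.End.mem_maxGenEigenspace]
  simp only [zero_smul, sub_zero]
  constructor
  · rintro ⟨k, hk⟩
    rw [hpow] at hk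
    have hBx : B.mulVec x = 0 := by
      rcases k with _ | k
      · simp only [pow_zero, Matrix.one_mulVec] at hk
        rw [hk]; simp [Matrix.mulVec_zero]
      · exact collapse hn P hpos hrow k x hk
    have hx : A.mulVec x = x := by
      rw [B_mulVec P x, sub_eq_zero] at hBx; exact hBx
    have : x = (x ⟨0, hn⟩) • (fun _ => (1:ℂ)) := by
      funext j
      simp only [Pi.smul_apply, smul_eq_mul, mul_one]
      exact eig_const hn P hpos hrow x hx j ⟨0, hn⟩
    rw [this]
    exact Submodule.smul_mem _ _ (Submodule.mem_span_singleton_self _)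
  · intro hx
    obtain ⟨c, rfl⟩ := Submodule.mem_span_singleton.1 hx
    refine ⟨1, ?_⟩
    rw [pow_one, Matrix.toLin'_apply, Matrix.mulVec_smul, B_mulVec P, mulVec_ones P hrow,
      sub_self, smul_zero]

lemma mult_one (hn : 0 < n) (P : Matrix (Fin n) (Fin n) ℝ) (hpos : ∀ i j, 0 < P i j)
    (hrow : ∀ i, ∑ j, P i j = 1) :
    (P.map Complex.ofReal).charpoly.rootMultiplicity 1 = 1 := by
  classical
  set A := P.map Complex.ofReal
  rw [Polynomial.rootMultiplicity_eq_natTrailingDegree, charpoly_comp]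
  have h1 : A - (1:ℂ) • (1 : Matrix (Fin n) (Fin n) ℂ) = A - 1 := by rw [one_smul]
  rw [h1]
  have hφ : (Matrix.toLin' (A - 1)).charpoly = (A - 1).charpoly := by
    have := LinearMap.charpoly_toMatrix (f := Matrix.toLin' (A - 1)) (Pi.basisFun ℂ (Fin n))
    rw [LinearMap.toMatrix_eq_toMatrix', LinearMap.toMatrix'_toLin'] at this
    exact this.symm
  rw [← hφ, ← LinearMap.finrank_maxGenEigenspace_zero_eq, maxgen_eq_span hn P hpos hrow,
    finrank_span_singleton]
  intro h0
  have := congrFun h0 ⟨0, hn⟩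
  simp at this

end PerronAux

/-- Perron–Frobenius for positive stochastic matrices: a stochastic matrix with all
entries strictly positive has `1` as an eigenvalue of algebraic multiplicity one,
and every other (complex) eigenvalue has absolute value strictly less than `1`. -/
theorem positive_stochastic_perron (n : ℕ) (hn : 0 < n)
    (P : Matrix (Fin n) (Fin n) ℝ)
    (hpos : ∀ i j, 0 < P i j) (hrow : ∀ i, ∑ j, P i j = 1) :
    ((P.map (Complex.ofReal)).charpoly.rootMultiplicity 1 = 1) ∧
    (∀ μ : ℂ, (P.map (Complex.ofReal)).charpoly.IsRoot μ → μ ≠ 1 → ‖μ‖ < 1) := by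
  constructor
  · exact PerronAux.mult_one hn P hpos hrow
  · intro μ hroot hμ
    have hdet : (Matrix.diagonal (fun _ : Fin n => μ) - P.map Complex.ofReal).det = 0 := by
      rw [← PerronAux.eval_charpoly]; exact hroot
    obtain ⟨v, hv0, hv⟩ := (Matrix.exists_mulVec_eq_zero_iff).2 hdet
    have hAv : (P.map Complex.ofReal).mulVec v = μ • v := by
      rw [Matrix.sub_mulVec] at hv
      have hdiag : (Matrix.diagonal (fun _ : Fin n => μ)).mulVec v = μ • v := by
        funext i
        simp [Matrix.mulVec_diagonal]
      rw [hdiag] at hv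
      have := sub_eq_zero.1 hv
      exact this.symm
    exact PerronAux.abs_lt_one hn P hpos hrow μ v hv0 hAv hμ
end

section
/- Let u_1,...,u_n (n ≥ 3) be i.i.d. real random variables with u_i ≠ 0 almost surely and E(u_i^4), E(u_i^8), E(1/u_i^4), E(1/u_i^8) all finite. Let M be the entrywise square of the Householder matrix built from u/||u||_2. Then E(||M - I||_F^2) ≤ (16n/(n-1)^4) E(1/u_1^8) E(u_1^8) + (16n/(n-1)^2) E(1/u_1^4) E(u_1^4) + (16n(n-1)/(n-2)^4) E(1/u_1^8) (E(u_1^4))^2, and consequently E(||M - I||_F) → 0 as n → ∞. -/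
open MeasureTheory ProbabilityTheory Filter

/-- The entrywise square of the Householder matrix `I - 2vvᵀ` built from `v = u/‖u‖₂`. -/
noncomputable def householderSq (n : ℕ) (u : Fin n → ℝ) : Matrix (Fin n) (Fin n) ℝ :=
  Matrix.of fun i j =>
    (((1 : Matrix (Fin n) (Fin n) ℝ) -
        (2 : ℝ) • Matrix.vecMulVec (fun k => u k / Real.sqrt (∑ l, u l ^ 2))
          (fun k => u k / Real.sqrt (∑ l, u l ^ 2))) i j) ^ 2

/-- The squared Frobenius norm of a matrix. -/
noncomputable def frobSq {n : ℕ} (A : Matrix (Fin n) (Fin n) ℝ) : ℝ :=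
  ∑ i, ∑ j, (A i j) ^ 2

open Finset in
lemma hh_aux1 (S R Q c : ℝ) (hS : 0 < S) (hc : 0 < c) (hR : 0 ≤ R) (hQ : 0 ≤ Q)
    (h1 : c ^ 2 ≤ S * R) (h2 : R ^ 2 ≤ c * Q) : 1 / S ^ 2 ≤ Q / c ^ 3 := by
  rw [div_le_div_iff₀ (by positivity) (by positivity)]
  have h3 : (c ^ 2) ^ 2 ≤ (S * R) ^ 2 := pow_le_pow_left₀ (by positivity) h1 2
  have h4 : S ^ 2 * R ^ 2 ≤ S ^ 2 * (c * Q) := mul_le_mul_of_nonneg_left h2 (by positivity)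
  nlinarith

lemma hh_aux2 (S R Q P c : ℝ) (hS : 0 < S) (hc : 0 < c) (hR : 0 ≤ R) (hQ : 0 ≤ Q) (hP : 0 ≤ P)
    (h1 : c ^ 2 ≤ S * R) (h2 : R ^ 2 ≤ c * Q) (h3 : Q ^ 2 ≤ c * P) :
    1 / S ^ 4 ≤ P / c ^ 5 := by
  rw [div_le_div_iff₀ (by positivity) (by positivity)]
  have h4 : (c ^ 2) ^ 2 ≤ (S * R) ^ 2 := pow_le_pow_left₀ (by positivity) h1 2
  have h5 : ((c ^ 2) ^ 2) ^ 2 ≤ ((S * R) ^ 2) ^ 2 := pow_le_pow_left₀ (by positivity) h4 2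
  -- c^8 ≤ S^4 R^4
  have h6 : (R ^ 2) ^ 2 ≤ (c * Q) ^ 2 := pow_le_pow_left₀ (by positivity) h2 2
  -- R^4 ≤ c^2 Q^2 ≤ c^2 * (c*P) = c^3 P
  have h7 : c ^ 2 * Q ^ 2 ≤ c ^ 2 * (c * P) := mul_le_mul_of_nonneg_left h3 (by positivity)
  have h8 : R ^ 4 ≤ c ^ 3 * P := by nlinarith
  have h9 : c ^ 8 ≤ S ^ 4 * (c ^ 3 * P) := by nlinarith [pow_le_pow_left₀ (by positivity : (0:ℝ) ≤ R^4) (le_refl (R^4)) 1, mul_le_mul_of_nonneg_left h8 (by positivity : (0:ℝ) ≤ S ^ 4)]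
  nlinarith [pow_pos hc 3, pow_pos hc 5]

open Finset in
lemma hh_sq_sum_le {ι : Type*} (s : Finset ι) (f : ι → ℝ) :
    (∑ i ∈ s, f i) ^ 2 ≤ (s.card : ℝ) * ∑ i ∈ s, f i ^ 2 := by
  have h := sum_mul_sq_le_sq_mul_sq s (fun _ => (1 : ℝ)) f
  simpa using h

open Finset in
lemma hh_det_bound (n : ℕ) (hn : 3 ≤ n) (w : Fin n → ℝ) (hw : ∀ i, w i ≠ 0) :
    frobSq (householderSq n w - 1) ≤
      (16 / ((n : ℝ) - 1) ^ 3) * ∑ i, ∑ l ∈ ({i}ᶜ : Finset (Fin n)), w i ^ 4 * (1 / w l ^ 4) +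
      (16 / ((n : ℝ) - 2) ^ 5) * ∑ i, ∑ j ∈ ({i}ᶜ : Finset (Fin n)),
          ∑ l ∈ ({i, j}ᶜ : Finset (Fin n)), w i ^ 4 * (w j ^ 4 * (1 / w l ^ 8)) := by
  have hn0 : (0 : ℕ) < n := by omega
  set S : ℝ := ∑ l, w l ^ 2 with hSdef
  have hS : 0 < S := by
    have h0 : (0 : ℝ) < w ⟨0, hn0⟩ ^ 2 :=
      lt_of_le_of_ne (sq_nonneg _) (Ne.symm (pow_ne_zero _ (hw _)))
    exact lt_of_lt_of_le h0 (Finset.single_le_sum (fun l _ => sq_nonneg (w l)) (mem_univ _))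
  have hc1 : (0 : ℝ) < (n : ℝ) - 1 := by
    have : (3:ℝ) ≤ (n:ℝ) := by exact_mod_cast hn
    linarith
  have hc2 : (0 : ℝ) < (n : ℝ) - 2 := by
    have : (3:ℝ) ≤ (n:ℝ) := by exact_mod_cast hn
    linarith
  have hentry : ∀ i j : Fin n, (householderSq n w - 1) i j =
      ((if i = j then (1:ℝ) else 0) - 2 * (w i * w j / S)) ^ 2 -
        (if i = j then (1:ℝ) else 0) := by
    intro i j
    have hsq : Real.sqrt S * Real.sqrt S = S := Real.mul_self_sqrt hS.le
    simp only [Matrix.sub_apply, householderSq, Matrix.of_apply, Matrix.sub_apply,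
      Matrix.smul_apply, Matrix.vecMulVec_apply, smul_eq_mul, Matrix.one_apply, ← hSdef]
    rw [div_mul_div_comm, hsq]
  -- Cauchy–Schwarz bounds
  have hcard1 : ∀ i : Fin n, (({i}ᶜ : Finset (Fin n)).card : ℝ) = (n : ℝ) - 1 := by
    intro i
    rw [card_compl, card_singleton, Fintype.card_fin, Nat.cast_sub (by omega)]
    simp
  have hcard2 : ∀ i j : Fin n, i ≠ j → ((({i, j}ᶜ : Finset (Fin n)).card : ℝ)) = (n : ℝ) - 2 := by
    intro i j hij
    rw [card_compl, Fintype.card_fin, card_insert_of_notMem (by simp [hij]), card_singleton,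
      Nat.cast_sub (by omega)]
    simp
  have hCS1 : ∀ (s : Finset (Fin n)), ((s.card : ℝ)) ^ 2 ≤ S * ∑ l ∈ s, 1 / w l ^ 2 := by
    intro s
    have h1 : (∑ l ∈ s, w l * (1 / w l)) = (s.card : ℝ) := by
      rw [Finset.sum_congr rfl (fun l _ => mul_one_div_cancel (hw l))]
      simp
    have h2 := sum_mul_sq_le_sq_mul_sq s w (fun l => 1 / w l)
    rw [h1] at h2
    have h3 : ∑ l ∈ s, w l ^ 2 ≤ S :=
      Finset.sum_le_sum_of_subset_of_nonneg (subset_univ s) (fun l _ _ => sq_nonneg _)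
    calc ((s.card : ℝ)) ^ 2 ≤ (∑ l ∈ s, w l ^ 2) * ∑ l ∈ s, (1 / w l) ^ 2 := h2
      _ = (∑ l ∈ s, w l ^ 2) * ∑ l ∈ s, 1 / w l ^ 2 := by
          congr 1
          exact Finset.sum_congr rfl (fun l _ => by rw [div_pow, one_pow])
      _ ≤ S * ∑ l ∈ s, 1 / w l ^ 2 := by
          apply mul_le_mul_of_nonneg_right h3
          exact Finset.sum_nonneg fun l _ => by positivity
  have hCS2 : ∀ (s : Finset (Fin n)) (k : ℕ),
      (∑ l ∈ s, 1 / w l ^ k) ^ 2 ≤ (s.card : ℝ) * ∑ l ∈ s, 1 / w l ^ (2 * k) := by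
    intro s k
    have h := hh_sq_sum_le s (fun l => 1 / w l ^ k)
    calc (∑ l ∈ s, 1 / w l ^ k) ^ 2 ≤ (s.card : ℝ) * ∑ l ∈ s, (1 / w l ^ k) ^ 2 := h
      _ = (s.card : ℝ) * ∑ l ∈ s, 1 / w l ^ (2 * k) := by
          congr 1
          exact Finset.sum_congr rfl (fun l _ => by
            rw [div_pow, one_pow, ← pow_mul, mul_comm k 2])
  -- per-i diagonal bound
  have hdiag : ∀ i : Fin n, (((1:ℝ) - 2 * (w i * w i / S)) ^ 2 - 1) ^ 2 ≤
      (16 / ((n : ℝ) - 1) ^ 3) * ∑ l ∈ ({i}ᶜ : Finset (Fin n)), w i ^ 4 * (1 / w l ^ 4) := by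
    intro i
    set R : ℝ := ∑ l ∈ ({i}ᶜ : Finset (Fin n)), 1 / w l ^ 2 with hR
    set Q : ℝ := ∑ l ∈ ({i}ᶜ : Finset (Fin n)), 1 / w l ^ 4 with hQ
    have hRn : 0 ≤ R := Finset.sum_nonneg fun l _ => by positivity
    have hQn : 0 ≤ Q := Finset.sum_nonneg fun l _ => by positivity
    have h1 : ((n : ℝ) - 1) ^ 2 ≤ S * R := by
      have := hCS1 ({i}ᶜ : Finset (Fin n)); rwa [hcard1 i] at this
    have h2 : R ^ 2 ≤ ((n : ℝ) - 1) * Q := by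
      have := hCS2 ({i}ᶜ : Finset (Fin n)) 2
      rwa [hcard1 i] at this
    have hinv : 1 / S ^ 2 ≤ Q / ((n : ℝ) - 1) ^ 3 :=
      hh_aux1 S R Q _ hS hc1 hRn hQn h1 h2
    set t : ℝ := w i ^ 2 / S with ht
    have ht0 : 0 ≤ t := by positivity
    have ht1 : t ≤ 1 := by
      rw [div_le_one hS]
      exact Finset.single_le_sum (fun l _ => sq_nonneg (w l)) (mem_univ i)
    have hval : ((1:ℝ) - 2 * (w i * w i / S)) ^ 2 - 1 = 4 * t ^ 2 - 4 * t := by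
      rw [ht]
      field_simp
      ring
    rw [hval]
    have h3 : (4 * t ^ 2 - 4 * t) ^ 2 ≤ 16 * t ^ 2 := by
      have h2t : 0 ≤ 2 - t := by linarith
      nlinarith [mul_nonneg (mul_nonneg (mul_nonneg ht0 ht0) ht0) h2t]
    have h4 : t ^ 2 = w i ^ 4 * (1 / S ^ 2) := by
      rw [ht]; field_simp
    have h5 : 16 * t ^ 2 ≤ 16 * (w i ^ 4 * (Q / ((n : ℝ) - 1) ^ 3)) := by
      rw [h4]
      have := mul_le_mul_of_nonneg_left hinv (by positivity : (0:ℝ) ≤ w i ^ 4)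
      linarith
    have h6 : (16 : ℝ) * (w i ^ 4 * (Q / ((n : ℝ) - 1) ^ 3)) =
        (16 / ((n : ℝ) - 1) ^ 3) * ∑ l ∈ ({i}ᶜ : Finset (Fin n)), w i ^ 4 * (1 / w l ^ 4) := by
      rw [← Finset.mul_sum, hQ.symm]
      ring
    linarith
  -- per-(i,j) off-diagonal bound
  have hoff : ∀ i j : Fin n, j ≠ i → (((0:ℝ) - 2 * (w i * w j / S)) ^ 2 - 0) ^ 2 ≤
      (16 / ((n : ℝ) - 2) ^ 5) * ∑ l ∈ ({i, j}ᶜ : Finset (Fin n)), w i ^ 4 * (w j ^ 4 * (1 / w l ^ 8)) := by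
    intro i j hji
    have hij : i ≠ j := fun h => hji h.symm
    set R : ℝ := ∑ l ∈ ({i, j}ᶜ : Finset (Fin n)), 1 / w l ^ 2 with hR
    set Q : ℝ := ∑ l ∈ ({i, j}ᶜ : Finset (Fin n)), 1 / w l ^ 4 with hQ
    set P : ℝ := ∑ l ∈ ({i, j}ᶜ : Finset (Fin n)), 1 / w l ^ 8 with hP
    have hRn : 0 ≤ R := Finset.sum_nonneg fun l _ => by positivity
    have hQn : 0 ≤ Q := Finset.sum_nonneg fun l _ => by positivity
    have hPn : 0 ≤ P := Finset.sum_nonneg fun l _ => by positivity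
    have h1 : ((n : ℝ) - 2) ^ 2 ≤ S * R := by
      have := hCS1 ({i, j}ᶜ : Finset (Fin n)); rwa [hcard2 i j hij] at this
    have h2 : R ^ 2 ≤ ((n : ℝ) - 2) * Q := by
      have := hCS2 ({i, j}ᶜ : Finset (Fin n)) 2; rwa [hcard2 i j hij] at this
    have h3 : Q ^ 2 ≤ ((n : ℝ) - 2) * P := by
      have := hCS2 ({i, j}ᶜ : Finset (Fin n)) 4; rwa [hcard2 i j hij] at this
    have hinv : 1 / S ^ 4 ≤ P / ((n : ℝ) - 2) ^ 5 :=
      hh_aux2 S R Q P _ hS hc2 hRn hQn hPn h1 h2 h3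
    have hval : (((0:ℝ) - 2 * (w i * w j / S)) ^ 2 - 0) ^ 2 =
        16 * (w i ^ 4 * w j ^ 4) * (1 / S ^ 4) := by
      field_simp
      ring
    rw [hval]
    have h5 : 16 * (w i ^ 4 * w j ^ 4) * (1 / S ^ 4) ≤
        16 * (w i ^ 4 * w j ^ 4) * (P / ((n : ℝ) - 2) ^ 5) :=
      mul_le_mul_of_nonneg_left hinv (by positivity)
    have h6 : (16 : ℝ) * (w i ^ 4 * w j ^ 4) * (P / ((n : ℝ) - 2) ^ 5) =
        (16 / ((n : ℝ) - 2) ^ 5) *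
          ∑ l ∈ ({i, j}ᶜ : Finset (Fin n)), w i ^ 4 * (w j ^ 4 * (1 / w l ^ 8)) := by
      have : ∑ l ∈ ({i, j}ᶜ : Finset (Fin n)), w i ^ 4 * (w j ^ 4 * (1 / w l ^ 8)) =
          w i ^ 4 * w j ^ 4 * P := by
        rw [hP, Finset.mul_sum]
        exact Finset.sum_congr rfl fun l _ => by ring
      rw [this]; ring
    linarith
  -- now assemble
  have hsplit : frobSq (householderSq n w - 1) =
      ∑ i : Fin n, ((((1:ℝ) - 2 * (w i * w i / S)) ^ 2 - 1) ^ 2 +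
        ∑ j ∈ ({i}ᶜ : Finset (Fin n)), (((0:ℝ) - 2 * (w i * w j / S)) ^ 2 - 0) ^ 2) := by
    unfold frobSq
    refine Finset.sum_congr rfl fun i _ => ?_
    have : ∀ j : Fin n, ((householderSq n w - 1) i j) ^ 2 =
        (((if i = j then (1:ℝ) else 0) - 2 * (w i * w j / S)) ^ 2 -
          (if i = j then (1:ℝ) else 0)) ^ 2 := fun j => by rw [hentry]
    rw [Finset.sum_congr rfl fun j _ => this j]
    rw [← Finset.sum_compl_add_sum ({i} : Finset (Fin n))]
    rw [Finset.sum_singleton]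
    simp only [if_pos rfl]
    rw [add_comm]
    congr 1
    refine Finset.sum_congr rfl fun j hj => ?_
    have hji : i ≠ j := by
      intro h; rw [Finset.mem_compl, Finset.mem_singleton] at hj; exact hj h.symm
    rw [if_neg hji]
  rw [hsplit]
  calc ∑ i : Fin n, ((((1:ℝ) - 2 * (w i * w i / S)) ^ 2 - 1) ^ 2 +
        ∑ j ∈ ({i}ᶜ : Finset (Fin n)), (((0:ℝ) - 2 * (w i * w j / S)) ^ 2 - 0) ^ 2)
      ≤ ∑ i : Fin n,
          ((16 / ((n : ℝ) - 1) ^ 3) * ∑ l ∈ ({i}ᶜ : Finset (Fin n)), w i ^ 4 * (1 / w l ^ 4) +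
           (16 / ((n : ℝ) - 2) ^ 5) * ∑ j ∈ ({i}ᶜ : Finset (Fin n)),
             ∑ l ∈ ({i, j}ᶜ : Finset (Fin n)), w i ^ 4 * (w j ^ 4 * (1 / w l ^ 8))) := by
        refine Finset.sum_le_sum fun i _ => ?_
        refine add_le_add (hdiag i) ?_
        rw [Finset.mul_sum]
        refine Finset.sum_le_sum fun j hj => ?_
        have hji : j ≠ i := by
          rw [Finset.mem_compl, Finset.mem_singleton] at hj; exact hj
        exact hoff i j hji
    _ = (16 / ((n : ℝ) - 1) ^ 3) * ∑ i, ∑ l ∈ ({i}ᶜ : Finset (Fin n)), w i ^ 4 * (1 / w l ^ 4) +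
        (16 / ((n : ℝ) - 2) ^ 5) * ∑ i, ∑ j ∈ ({i}ᶜ : Finset (Fin n)),
          ∑ l ∈ ({i, j}ᶜ : Finset (Fin n)), w i ^ 4 * (w j ^ 4 * (1 / w l ^ 8)) := by
        rw [Finset.sum_add_distrib, Finset.mul_sum, Finset.mul_sum]

section HHAux
open Finset
variable {Ω : Type*} [MeasurableSpace Ω]

lemma hh_expect (μ : Measure Ω) [IsProbabilityMeasure μ]
    (X : Ω → ℝ) (hX : Measurable X)
    (hX0 : ∀ᵐ ω ∂μ, X ω ≠ 0)
    (h4 : Integrable (fun ω => X ω ^ 4) μ)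
    (hi4 : Integrable (fun ω => 1 / X ω ^ 4) μ)
    (hi8 : Integrable (fun ω => 1 / X ω ^ 8) μ)
    (n : ℕ) (hn : 3 ≤ n)
    (W : Fin n → Ω → ℝ) (hW : ∀ i, Measurable (W i))
    (hind : iIndepFun W μ)
    (hid : ∀ i, IdentDistrib (W i) X μ μ) :
    Integrable (fun ω => frobSq (householderSq n (fun i => W i ω) - 1)) μ ∧
    ∫ ω, frobSq (householderSq n (fun i => W i ω) - 1) ∂μ ≤
      (16 * n / ((n : ℝ) - 1) ^ 2) * (∫ ω, 1 / X ω ^ 4 ∂μ) * (∫ ω, X ω ^ 4 ∂μ) +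
      (16 * n * ((n : ℝ) - 1) / ((n : ℝ) - 2) ^ 4) * (∫ ω, 1 / X ω ^ 8 ∂μ) *
        (∫ ω, X ω ^ 4 ∂μ) ^ 2 := by
  have hc1 : (0 : ℝ) < (n : ℝ) - 1 := by
    have : (3:ℝ) ≤ (n:ℝ) := by exact_mod_cast hn
    linarith
  have hc2 : (0 : ℝ) < (n : ℝ) - 2 := by
    have : (3:ℝ) ≤ (n:ℝ) := by exact_mod_cast hn
    linarith
  have m4 : Measurable (fun x : ℝ => x ^ 4) := measurable_id.pow_const 4
  have mi4 : Measurable (fun x : ℝ => 1 / x ^ 4) := by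
    simp only [one_div]
    exact ((measurable_id (α := ℝ)).pow_const 4).inv
  have mi8 : Measurable (fun x : ℝ => 1 / x ^ 8) := by
    simp only [one_div]
    exact ((measurable_id (α := ℝ)).pow_const 8).inv
  -- identically distributed compositions
  have id4 : ∀ i, IdentDistrib (fun ω => W i ω ^ 4) (fun ω => X ω ^ 4) μ μ :=
    fun i => (hid i).comp m4
  have idi4 : ∀ i, IdentDistrib (fun ω => 1 / W i ω ^ 4) (fun ω => 1 / X ω ^ 4) μ μ :=
    fun i => (hid i).comp mi4
  have idi8 : ∀ i, IdentDistrib (fun ω => 1 / W i ω ^ 8) (fun ω => 1 / X ω ^ 8) μ μ :=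
    fun i => (hid i).comp mi8
  have int4 : ∀ i, Integrable (fun ω => W i ω ^ 4) μ := fun i => (id4 i).integrable_iff.mpr h4
  have inti4 : ∀ i, Integrable (fun ω => 1 / W i ω ^ 4) μ :=
    fun i => (idi4 i).integrable_iff.mpr hi4
  have inti8 : ∀ i, Integrable (fun ω => 1 / W i ω ^ 8) μ :=
    fun i => (idi8 i).integrable_iff.mpr hi8
  have E4 : ∀ i, ∫ ω, W i ω ^ 4 ∂μ = ∫ ω, X ω ^ 4 ∂μ := fun i => (id4 i).integral_eq
  have Ei4 : ∀ i, ∫ ω, 1 / W i ω ^ 4 ∂μ = ∫ ω, 1 / X ω ^ 4 ∂μ := fun i => (idi4 i).integral_eq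
  have Ei8 : ∀ i, ∫ ω, 1 / W i ω ^ 8 ∂μ = ∫ ω, 1 / X ω ^ 8 ∂μ := fun i => (idi8 i).integral_eq
  set IA : ℝ := ∫ ω, X ω ^ 4 ∂μ with hIA
  set IB : ℝ := ∫ ω, 1 / X ω ^ 4 ∂μ with hIB
  set IC : ℝ := ∫ ω, 1 / X ω ^ 8 ∂μ with hIC
  -- pair facts
  have indepPair : ∀ i l : Fin n, i ≠ l →
      IndepFun (fun ω => W i ω ^ 4) (fun ω => 1 / W l ω ^ 4) μ :=
    fun i l h => (hind.indepFun h).comp m4 mi4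
  have intPair : ∀ i l : Fin n, i ≠ l →
      Integrable (fun ω => W i ω ^ 4 * (1 / W l ω ^ 4)) μ := fun i l h =>
    (indepPair i l h).integrable_mul (int4 i) (inti4 l)
  have EPair : ∀ i l : Fin n, i ≠ l →
      ∫ ω, W i ω ^ 4 * (1 / W l ω ^ 4) ∂μ = IA * IB := by
    intro i l h
    calc ∫ ω, W i ω ^ 4 * (1 / W l ω ^ 4) ∂μ
        = integral μ ((fun ω => W i ω ^ 4) * fun ω => 1 / W l ω ^ 4) := rfl
      _ = (∫ ω, W i ω ^ 4 ∂μ) * ∫ ω, 1 / W l ω ^ 4 ∂μ :=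
          (indepPair i l h).integral_mul_eq_mul_integral (int4 i).aestronglyMeasurable (inti4 l).aestronglyMeasurable
      _ = IA * IB := by rw [E4 i, Ei4 l]
  -- triple facts
  have intTriple : ∀ i j l : Fin n, i ≠ j → i ≠ l → j ≠ l →
      Integrable (fun ω => W i ω ^ 4 * (W j ω ^ 4 * (1 / W l ω ^ 8))) μ := by
    intro i j l hij hil hjl
    have hY : Integrable (fun ω => W i ω ^ 4 * W j ω ^ 4) μ :=
      (((hind.indepFun hij).comp m4 m4)).integrable_mul (int4 i) (int4 j)
    have hYZ : IndepFun (fun ω => W i ω ^ 4 * W j ω ^ 4) (fun ω => 1 / W l ω ^ 8) μ :=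
      (hind.indepFun_prodMk hW i j l hil hjl).comp
        ((measurable_fst.pow_const 4).mul (measurable_snd.pow_const 4)) mi8
    have h := hYZ.integrable_mul hY (inti8 l)
    have heq : (fun ω => W i ω ^ 4 * (W j ω ^ 4 * (1 / W l ω ^ 8))) =
        ((fun ω => W i ω ^ 4 * W j ω ^ 4) * fun ω => 1 / W l ω ^ 8) := by
      funext ω; simp [mul_assoc]
    rw [heq]; exact h
  have ETriple : ∀ i j l : Fin n, i ≠ j → i ≠ l → j ≠ l →
      ∫ ω, W i ω ^ 4 * (W j ω ^ 4 * (1 / W l ω ^ 8)) ∂μ = IA * (IA * IC) := by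
    intro i j l hij hil hjl
    have hY : Integrable (fun ω => W i ω ^ 4 * W j ω ^ 4) μ :=
      (((hind.indepFun hij).comp m4 m4)).integrable_mul (int4 i) (int4 j)
    have hYZ : IndepFun (fun ω => W i ω ^ 4 * W j ω ^ 4) (fun ω => 1 / W l ω ^ 8) μ :=
      (hind.indepFun_prodMk hW i j l hil hjl).comp
        ((measurable_fst.pow_const 4).mul (measurable_snd.pow_const 4)) mi8
    have h2 : integral μ ((fun ω => W i ω ^ 4) * fun ω => W j ω ^ 4) =
        (∫ ω, W i ω ^ 4 ∂μ) * ∫ ω, W j ω ^ 4 ∂μ :=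
      ((hind.indepFun hij).comp m4 m4).integral_mul_eq_mul_integral (int4 i).aestronglyMeasurable (int4 j).aestronglyMeasurable
    calc ∫ ω, W i ω ^ 4 * (W j ω ^ 4 * (1 / W l ω ^ 8)) ∂μ
        = integral μ ((fun ω => W i ω ^ 4 * W j ω ^ 4) * fun ω => 1 / W l ω ^ 8) := by
          congr 1; funext ω; rw [Pi.mul_apply]; ring
      _ = (∫ ω, W i ω ^ 4 * W j ω ^ 4 ∂μ) * ∫ ω, 1 / W l ω ^ 8 ∂μ :=
          hYZ.integral_mul_eq_mul_integral hY.aestronglyMeasurable (inti8 l).aestronglyMeasurable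
      _ = IA * (IA * IC) := by
          have : (∫ ω, W i ω ^ 4 * W j ω ^ 4 ∂μ) = IA * IA := by
            rw [show (∫ ω, W i ω ^ 4 * W j ω ^ 4 ∂μ) =
              integral μ ((fun ω => W i ω ^ 4) * fun ω => W j ω ^ 4) from rfl, h2, E4 i, E4 j]
          rw [this, Ei8 l, mul_assoc]
  -- cards
  have hcard1 : ∀ i : Fin n, (({i}ᶜ : Finset (Fin n)).card : ℝ) = (n : ℝ) - 1 := by
    intro i
    rw [card_compl, card_singleton, Fintype.card_fin, Nat.cast_sub (by omega)]
    simp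
  have hcard2 : ∀ i j : Fin n, i ≠ j → ((({i, j}ᶜ : Finset (Fin n)).card : ℝ)) = (n : ℝ) - 2 := by
    intro i j hij
    rw [card_compl, Fintype.card_fin, card_insert_of_notMem (by simp [hij]), card_singleton,
      Nat.cast_sub (by omega)]
    simp
  -- the dominating function
  set c1 : ℝ := 16 / ((n : ℝ) - 1) ^ 3 with hc1def
  set c2 : ℝ := 16 / ((n : ℝ) - 2) ^ 5 with hc2def
  set G : Ω → ℝ := fun ω =>
      c1 * ∑ i, ∑ l ∈ ({i}ᶜ : Finset (Fin n)), W i ω ^ 4 * (1 / W l ω ^ 4) +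
      c2 * ∑ i, ∑ j ∈ ({i}ᶜ : Finset (Fin n)),
          ∑ l ∈ ({i, j}ᶜ : Finset (Fin n)), W i ω ^ 4 * (W j ω ^ 4 * (1 / W l ω ^ 8)) with hGdef
  have hne_of_mem : ∀ {i l : Fin n}, l ∈ ({i}ᶜ : Finset (Fin n)) → l ≠ i := by
    intro i l hl; rw [Finset.mem_compl, Finset.mem_singleton] at hl; exact hl
  have hne2_of_mem : ∀ {i j l : Fin n}, l ∈ ({i, j}ᶜ : Finset (Fin n)) → l ≠ i ∧ l ≠ j := by
    intro i j l hl
    rw [Finset.mem_compl, Finset.mem_insert, not_or, Finset.mem_singleton] at hl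
    exact hl
  have hG1int : Integrable (fun ω =>
      ∑ i, ∑ l ∈ ({i}ᶜ : Finset (Fin n)), W i ω ^ 4 * (1 / W l ω ^ 4)) μ :=
    integrable_finset_sum _ fun i _ => integrable_finset_sum _ fun l hl =>
      intPair i l (hne_of_mem hl).symm
  have hG2int : Integrable (fun ω => ∑ i, ∑ j ∈ ({i}ᶜ : Finset (Fin n)),
      ∑ l ∈ ({i, j}ᶜ : Finset (Fin n)), W i ω ^ 4 * (W j ω ^ 4 * (1 / W l ω ^ 8))) μ :=
    integrable_finset_sum _ fun i _ => integrable_finset_sum _ fun j hj =>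
      integrable_finset_sum _ fun l hl =>
        intTriple i j l (hne_of_mem hj).symm (hne2_of_mem hl).1.symm (hne2_of_mem hl).2.symm
  have hGint : Integrable G μ := (hG1int.const_mul c1).add (hG2int.const_mul c2)
  -- integral of G
  have hEG1 : ∫ ω, (∑ i, ∑ l ∈ ({i}ᶜ : Finset (Fin n)), W i ω ^ 4 * (1 / W l ω ^ 4)) ∂μ =
      (n : ℝ) * (((n : ℝ) - 1) * (IA * IB)) := by
    rw [integral_finset_sum _ (fun i _ => integrable_finset_sum _ fun l hl =>
      intPair i l (hne_of_mem hl).symm)]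
    have : ∀ i : Fin n, i ∈ (univ : Finset (Fin n)) →
        ∫ ω, (∑ l ∈ ({i}ᶜ : Finset (Fin n)), W i ω ^ 4 * (1 / W l ω ^ 4)) ∂μ =
          ((n : ℝ) - 1) * (IA * IB) := by
      intro i _
      rw [integral_finset_sum _ (fun l hl => intPair i l (hne_of_mem hl).symm)]
      rw [Finset.sum_congr rfl (fun l hl => EPair i l (hne_of_mem hl).symm)]
      rw [Finset.sum_const, nsmul_eq_mul, hcard1 i]
    rw [Finset.sum_congr rfl this, Finset.sum_const, nsmul_eq_mul]
    simp
  have hEG2 : ∫ ω, (∑ i, ∑ j ∈ ({i}ᶜ : Finset (Fin n)),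
      ∑ l ∈ ({i, j}ᶜ : Finset (Fin n)), W i ω ^ 4 * (W j ω ^ 4 * (1 / W l ω ^ 8))) ∂μ =
      (n : ℝ) * (((n : ℝ) - 1) * (((n : ℝ) - 2) * (IA * (IA * IC)))) := by
    rw [integral_finset_sum _ (fun i _ => integrable_finset_sum _ fun j hj =>
      integrable_finset_sum _ fun l hl =>
        intTriple i j l (hne_of_mem hj).symm (hne2_of_mem hl).1.symm (hne2_of_mem hl).2.symm)]
    have : ∀ i : Fin n, i ∈ (univ : Finset (Fin n)) →
        ∫ ω, (∑ j ∈ ({i}ᶜ : Finset (Fin n)),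
          ∑ l ∈ ({i, j}ᶜ : Finset (Fin n)), W i ω ^ 4 * (W j ω ^ 4 * (1 / W l ω ^ 8))) ∂μ =
          ((n : ℝ) - 1) * (((n : ℝ) - 2) * (IA * (IA * IC))) := by
      intro i _
      rw [integral_finset_sum _ (fun j hj => integrable_finset_sum _ fun l hl =>
        intTriple i j l (hne_of_mem hj).symm (hne2_of_mem hl).1.symm (hne2_of_mem hl).2.symm)]
      have hinner : ∀ j ∈ ({i}ᶜ : Finset (Fin n)),
          ∫ ω, (∑ l ∈ ({i, j}ᶜ : Finset (Fin n)),
            W i ω ^ 4 * (W j ω ^ 4 * (1 / W l ω ^ 8))) ∂μ =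
            ((n : ℝ) - 2) * (IA * (IA * IC)) := by
        intro j hj
        rw [integral_finset_sum _ (fun l hl =>
          intTriple i j l (hne_of_mem hj).symm (hne2_of_mem hl).1.symm (hne2_of_mem hl).2.symm)]
        rw [Finset.sum_congr rfl (fun l hl =>
          ETriple i j l (hne_of_mem hj).symm (hne2_of_mem hl).1.symm (hne2_of_mem hl).2.symm)]
        rw [Finset.sum_const, nsmul_eq_mul, hcard2 i j (hne_of_mem hj).symm]
      rw [Finset.sum_congr rfl hinner, Finset.sum_const, nsmul_eq_mul, hcard1 i]
    rw [Finset.sum_congr rfl this, Finset.sum_const, nsmul_eq_mul]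
    simp
  have hEG : ∫ ω, G ω ∂μ =
      c1 * ((n : ℝ) * (((n : ℝ) - 1) * (IA * IB))) +
      c2 * ((n : ℝ) * (((n : ℝ) - 1) * (((n : ℝ) - 2) * (IA * (IA * IC))))) := by
    rw [hGdef]
    rw [integral_add (hG1int.const_mul c1) (hG2int.const_mul c2),
      integral_const_mul, integral_const_mul, hEG1, hEG2]
  -- a.e. nonvanishing
  have hu0 : ∀ i : Fin n, ∀ᵐ ω ∂μ, W i ω ≠ 0 := by
    intro i
    have hmap := (hid i).map_eq
    rw [ae_iff] at hX0 ⊢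
    simp only [not_not] at hX0 ⊢
    have h1 : {ω | W i ω = 0} = W i ⁻¹' {0} := rfl
    have h2 : {ω | X ω = 0} = X ⁻¹' {0} := rfl
    rw [h1, ← Measure.map_apply (hW i) (measurableSet_singleton 0), hmap,
      Measure.map_apply hX (measurableSet_singleton 0), ← h2, hX0]
  have hall : ∀ᵐ ω ∂μ, ∀ i, W i ω ≠ 0 := ae_all_iff.mpr hu0
  -- pointwise domination
  set F : Ω → ℝ := fun ω => frobSq (householderSq n (fun i => W i ω) - 1) with hFdef
  have hF0 : ∀ ω, 0 ≤ F ω := fun ω =>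
    Finset.sum_nonneg fun i _ => Finset.sum_nonneg fun j _ => sq_nonneg _
  have hFG : ∀ᵐ ω ∂μ, F ω ≤ G ω := by
    filter_upwards [hall] with ω hω
    exact hh_det_bound n hn (fun i => W i ω) hω
  have hFle : ∫ ω, F ω ∂μ ≤ ∫ ω, G ω ∂μ :=
    integral_mono_of_nonneg (Eventually.of_forall hF0) hGint hFG
  -- measurability of F
  have hFmeas : Measurable F := by
    have hSmeas : Measurable fun ω => ∑ l, W l ω ^ 2 :=
      Finset.measurable_sum _ fun l _ => (hW l).pow_const 2
    rw [hFdef]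
    unfold frobSq
    apply Finset.measurable_sum; intro i _
    apply Finset.measurable_sum; intro j _
    apply Measurable.pow_const
    apply Measurable.sub _ measurable_const
    simp only [householderSq, Matrix.sub_apply, Matrix.of_apply, Matrix.smul_apply,
      Matrix.vecMulVec_apply, smul_eq_mul, Matrix.one_apply]
    apply Measurable.pow_const
    apply Measurable.sub measurable_const
    apply Measurable.mul measurable_const
    exact ((hW i).div hSmeas.sqrt).mul ((hW j).div hSmeas.sqrt)
  have hFint : Integrable F μ := by
    refine hGint.mono' hFmeas.aestronglyMeasurable ?_
    filter_upwards [hFG] with ω hω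
    rw [Real.norm_eq_abs, abs_of_nonneg (hF0 ω)]
    exact hω
  refine ⟨hFint, ?_⟩
  refine hFle.trans ?_
  rw [hEG, hc1def, hc2def]
  have e1 : 16 / ((n : ℝ) - 1) ^ 3 * ((n : ℝ) * (((n : ℝ) - 1) * (IA * IB))) =
      16 * (n : ℝ) / ((n : ℝ) - 1) ^ 2 * IB * IA := by
    field_simp
  have e2 : 16 / ((n : ℝ) - 2) ^ 5 *
      ((n : ℝ) * (((n : ℝ) - 1) * (((n : ℝ) - 2) * (IA * (IA * IC))))) =
      16 * (n : ℝ) * ((n : ℝ) - 1) / ((n : ℝ) - 2) ^ 4 * IC * IA ^ 2 := by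
    field_simp
  rw [e1, e2]

end HHAux

lemma hh_sqrt_le (x ε : ℝ) (hx : 0 ≤ x) (hε : 0 < ε) : Real.sqrt x ≤ ε + x / ε := by
  rw [show ε + x / ε = (ε ^ 2 + x) / ε by field_simp, le_div_iff₀ hε]
  nlinarith [sq_nonneg (Real.sqrt x - ε), Real.sq_sqrt hx, Real.sqrt_nonneg x,
    mul_nonneg (Real.sqrt_nonneg x) hε.le]

/-- If `u₁, …, uₙ` (for each `n ≥ 3`) are i.i.d. real random variables, nonzero a.s.,
with finite moments `E(u⁴), E(u⁸), E(1/u⁴), E(1/u⁸)`, and `M` is the entrywise square of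
the Householder matrix built from `u/‖u‖₂`, then
`E(‖M-I‖_F²) ≤ (16n/(n-1)⁴)E(1/u⁸)E(u⁸) + (16n/(n-1)²)E(1/u⁴)E(u⁴) + (16n(n-1)/(n-2)⁴)E(1/u⁸)(E(u⁴))²`,
and consequently `E(‖M-I‖_F) → 0` as `n → ∞`. -/
theorem householder_expected_frobenius
    {Ω : Type*} [MeasurableSpace Ω] (μ : Measure Ω) [IsProbabilityMeasure μ]
    (X : Ω → ℝ) (hX : Measurable X)
    (hX0 : ∀ᵐ ω ∂μ, X ω ≠ 0)
    (h4 : Integrable (fun ω => X ω ^ 4) μ)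
    (h8 : Integrable (fun ω => X ω ^ 8) μ)
    (hi4 : Integrable (fun ω => 1 / X ω ^ 4) μ)
    (hi8 : Integrable (fun ω => 1 / X ω ^ 8) μ)
    (u : (n : ℕ) → Fin n → Ω → ℝ)
    (hmeas : ∀ n i, Measurable (u n i))
    (hindep : ∀ n, iIndepFun (u n) μ)
    (hident : ∀ n i, IdentDistrib (u n i) X μ μ) :
    (∀ n, 3 ≤ n →
      ∫ ω, frobSq (householderSq n (fun i => u n i ω) - 1) ∂μ ≤
        (16 * n / ((n : ℝ) - 1) ^ 4) * (∫ ω, 1 / X ω ^ 8 ∂μ) * (∫ ω, X ω ^ 8 ∂μ) +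
        (16 * n / ((n : ℝ) - 1) ^ 2) * (∫ ω, 1 / X ω ^ 4 ∂μ) * (∫ ω, X ω ^ 4 ∂μ) +
        (16 * n * ((n : ℝ) - 1) / ((n : ℝ) - 2) ^ 4) * (∫ ω, 1 / X ω ^ 8 ∂μ) *
          (∫ ω, X ω ^ 4 ∂μ) ^ 2) ∧
    Tendsto (fun n => ∫ ω, Real.sqrt (frobSq (householderSq n (fun i => u n i ω) - 1)) ∂μ)
      atTop (nhds 0) := by
  have hA0 : 0 ≤ ∫ ω, X ω ^ 4 ∂μ := integral_nonneg fun ω => by positivity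
  have hB0 : 0 ≤ ∫ ω, 1 / X ω ^ 4 ∂μ := integral_nonneg fun ω => by positivity
  have hC0 : 0 ≤ ∫ ω, 1 / X ω ^ 8 ∂μ := integral_nonneg fun ω => by positivity
  have hD0 : 0 ≤ ∫ ω, X ω ^ 8 ∂μ := integral_nonneg fun ω => by positivity
  set IA : ℝ := ∫ ω, X ω ^ 4 ∂μ
  set IB : ℝ := ∫ ω, 1 / X ω ^ 4 ∂μ
  set IC : ℝ := ∫ ω, 1 / X ω ^ 8 ∂μ
  have key : ∀ n, 3 ≤ n →
      Integrable (fun ω => frobSq (householderSq n (fun i => u n i ω) - 1)) μ ∧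
      ∫ ω, frobSq (householderSq n (fun i => u n i ω) - 1) ∂μ ≤
        (16 * n / ((n : ℝ) - 1) ^ 2) * IB * IA +
        (16 * n * ((n : ℝ) - 1) / ((n : ℝ) - 2) ^ 4) * IC * IA ^ 2 :=
    fun n hn => hh_expect μ X hX hX0 h4 hi4 hi8 n hn (u n) (hmeas n) (hindep n) (hident n)
  constructor
  · intro n hn
    have h := (key n hn).2
    have hpos : 0 ≤ (16 * n / ((n : ℝ) - 1) ^ 4) * IC * (∫ ω, X ω ^ 8 ∂μ) := by
      have h1 : (0:ℝ) ≤ 16 * n / ((n : ℝ) - 1) ^ 4 := by positivity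
      exact mul_nonneg (mul_nonneg h1 hC0) hD0
    linarith
  · set K : ℝ := 64 * (IB * IA) + 432 * (IC * IA ^ 2) with hK
    have hK0 : 0 ≤ K := by positivity
    have hbK : ∀ n : ℕ, 3 ≤ n →
        (16 * n / ((n : ℝ) - 1) ^ 2) * IB * IA +
        (16 * n * ((n : ℝ) - 1) / ((n : ℝ) - 2) ^ 4) * IC * IA ^ 2 ≤ K / n := by
      intro n hn
      have hx : (3:ℝ) ≤ (n:ℝ) := by exact_mod_cast hn
      have hn0 : (0:ℝ) < (n:ℝ) := by linarith
      have hc1 : (0:ℝ) < (n:ℝ) - 1 := by linarith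
      have hc2 : (0:ℝ) < (n:ℝ) - 2 := by linarith
      have e1 : 16 * (n:ℝ) / ((n : ℝ) - 1) ^ 2 ≤ 64 / n := by
        rw [div_le_div_iff₀ (by positivity) hn0]
        nlinarith
      have e2 : 16 * (n:ℝ) * ((n : ℝ) - 1) / ((n : ℝ) - 2) ^ 4 ≤ 432 / n := by
        rw [div_le_div_iff₀ (by positivity) hn0]
        nlinarith [sq_nonneg ((n:ℝ) - 3), sq_nonneg ((n:ℝ) - 2), mul_pos hn0 hn0,
          mul_nonneg (mul_nonneg hc2.le hc2.le) (sub_nonneg.mpr hx)]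
      have f1 : (16 * n / ((n : ℝ) - 1) ^ 2) * IB * IA ≤ (64 / n) * (IB * IA) := by
        rw [mul_assoc]
        exact mul_le_mul_of_nonneg_right e1 (mul_nonneg hB0 hA0)
      have f2 : (16 * n * ((n : ℝ) - 1) / ((n : ℝ) - 2) ^ 4) * IC * IA ^ 2 ≤
          (432 / n) * (IC * IA ^ 2) := by
        rw [mul_assoc]
        exact mul_le_mul_of_nonneg_right e2 (mul_nonneg hC0 (by positivity))
      have : (64 / (n:ℝ)) * (IB * IA) + (432 / n) * (IC * IA ^ 2) = K / n := by
        rw [hK]; field_simp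
      linarith
    have habove : ∀ n : ℕ, 3 ≤ n →
        ∫ ω, Real.sqrt (frobSq (householderSq n (fun i => u n i ω) - 1)) ∂μ ≤
          2 * Real.sqrt ((K + 1) / n) := by
      intro n hn
      have hx : (3:ℝ) ≤ (n:ℝ) := by exact_mod_cast hn
      have hn0 : (0:ℝ) < (n:ℝ) := by linarith
      have hKn : (0:ℝ) < (K + 1) / n := by positivity
      set ε : ℝ := Real.sqrt ((K + 1) / n) with hε
      have hε0 : 0 < ε := Real.sqrt_pos.mpr hKn
      have hε2 : ε ^ 2 = (K + 1) / n := Real.sq_sqrt hKn.le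
      obtain ⟨hint, hle⟩ := key n hn
      set F : Ω → ℝ := fun ω => frobSq (householderSq n (fun i => u n i ω) - 1) with hF
      have hF0 : ∀ ω, 0 ≤ F ω := fun ω =>
        Finset.sum_nonneg fun i _ => Finset.sum_nonneg fun j _ => sq_nonneg _
      have h2 : Integrable (fun ω => ε + F ω / ε) μ :=
        (integrable_const ε).add (hint.div_const ε)
      have h3 : ∫ ω, Real.sqrt (F ω) ∂μ ≤ ∫ ω, (ε + F ω / ε) ∂μ :=
        integral_mono_of_nonneg (Eventually.of_forall fun ω => Real.sqrt_nonneg _) h2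
          (Eventually.of_forall fun ω => hh_sqrt_le (F ω) ε (hF0 ω) hε0)
      have h4 : ∫ ω, (ε + F ω / ε) ∂μ = ε + (∫ ω, F ω ∂μ) / ε := by
        rw [integral_add (integrable_const ε) (hint.div_const ε), integral_const,
          integral_div]
        simp
      have h5 : (∫ ω, F ω ∂μ) / ε ≤ ((K + 1) / n) / ε := by
        gcongr
        refine hle.trans ((hbK n hn).trans ?_)
        gcongr
        linarith
      have h6 : ((K + 1) / (n:ℝ)) / ε = ε := by
        rw [← hε2, pow_two, mul_div_assoc, div_self hε0.ne', mul_one]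
      calc ∫ ω, Real.sqrt (F ω) ∂μ ≤ ε + (∫ ω, F ω ∂μ) / ε := h3.trans_eq h4
        _ ≤ ε + ε := by rw [h6] at h5; linarith
        _ = 2 * ε := by ring
    have t1 : Tendsto (fun n : ℕ => (K + 1) / (n:ℝ)) atTop (nhds 0) :=
      tendsto_const_div_atTop_nhds_zero_nat (K + 1)
    have t2 : Tendsto (fun n : ℕ => 2 * Real.sqrt ((K + 1) / n)) atTop (nhds 0) := by
      have h := (Real.continuous_sqrt.tendsto 0).comp t1
      simp only [Function.comp_def, Real.sqrt_zero] at h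
      have := h.const_mul (2:ℝ)
      simpa using this
    refine squeeze_zero' ?_ ?_ t2
    · filter_upwards with n
      exact integral_nonneg fun ω => Real.sqrt_nonneg _
    · filter_upwards [eventually_ge_atTop 3] with n hn
      exact habove n hn
end
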